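/- Let G be a real Hilbert space and let g, ℓ ∈ Γ₀(G) with dom ℓ* = G. Then ∂g □ ∂ℓ = ∂(g □ ℓ), where g □ ℓ is the infimal convolution (g □ ℓ)(x) = inf_y (g(y) + ℓ(x−y)), and g □ ℓ ∈ Γ₀(G). -/

import Mathlib

open scoped RealInnerProductSpace

noncomputable section

variable {G : Type*} [NormedAddCommGroup G] [InnerProductSpace ℝ G]

/-- Properness of an extended-real-valued function. -/
def EProper (f : G → EReal) : Prop := (∀ x, f x ≠ ⊥) ∧ ∃ x, f x ≠ ⊤

/-- Convexity of an extended-real-valued function. -/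
def EConvexOn (f : G → EReal) : Prop :=
  ∀ x y : G, ∀ a b : ℝ, 0 ≤ a → 0 ≤ b → a + b = 1 →
    f (a • x + b • y) ≤ (a : EReal) * f x + (b : EReal) * f y

/-- Fenchel conjugate. -/
def EConj (f : G → EReal) (u : G) : EReal := ⨆ x : G, (⟪x, u⟫ : EReal) - f x

/-- Convex subdifferential. -/
def ESubdiff (f : G → EReal) (x : G) : Set G :=
  {u | ∀ y, f x + ((⟪y - x, u⟫ : ℝ) : EReal) ≤ f y}

/-- Infimal convolution. -/
def EInfConv (g l : G → EReal) (x : G) : EReal := ⨅ y : G, g y + l (x - y)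

/-- Inverse of a set-valued operator. -/
def opInv (A : G → Set G) (u : G) : Set G := {x | u ∈ A x}

/-- Parallel sum `A □ B = (A⁻¹ + B⁻¹)⁻¹` of two set-valued operators. -/
def parSum (A B : G → Set G) (y : G) : Set G :=
  {p | ∃ a ∈ opInv A p, ∃ b ∈ opInv B p, a + b = y}

section Aux

set_option linter.unusedSectionVars false
set_option linter.unusedVariables false

variable [CompleteSpace G]

def epiSet (f : G → EReal) : Set (G × ℝ) := {q | f q.1 ≤ (q.2 : EReal)}


lemma epi_closed {f : G → EReal} (hf : LowerSemicontinuous f) : IsClosed (epiSet f) := by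
  rw [← isOpen_compl_iff]
  have : (epiSet f)ᶜ = ⋃ r : ℚ, ((fun q : G × ℝ => f q.1) ⁻¹' Set.Ioi ((r : ℝ) : EReal)) ∩
      (Prod.snd ⁻¹' Set.Iio (r : ℝ)) := by
    ext ⟨w, t⟩
    simp only [Set.mem_compl_iff, epiSet, Set.mem_setOf_eq, not_le, Set.mem_iUnion,
      Set.mem_inter_iff, Set.mem_preimage, Set.mem_Ioi, Set.mem_Iio]
    constructor
    · intro h
      obtain ⟨r, hr1, hr2⟩ := EReal.exists_rat_btwn_of_lt h
      exact ⟨r, hr2, by exact_mod_cast hr1⟩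
    · rintro ⟨r, hr1, hr2⟩
      exact lt_trans (by exact_mod_cast hr2) hr1
  rw [this]
  exact isOpen_iUnion fun r => (((hf.comp continuous_fst).isOpen_preimage
    (((r : ℝ) : EReal))).inter ((isOpen_Iio).preimage continuous_snd))


lemma epi_convex {f : G → EReal} (hf : EConvexOn f) : Convex ℝ (epiSet f) := by
  rintro ⟨w1, t1⟩ h1 ⟨w2, t2⟩ h2 a b ha hb hab
  simp only [epiSet, Set.mem_setOf_eq] at h1 h2 ⊢
  simp only [Prod.smul_mk, Prod.mk_add_mk, smul_eq_mul]
  calc f (a • w1 + b • w2) ≤ (a : EReal) * f w1 + (b : EReal) * f w2 := hf w1 w2 a b ha hb hab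
    _ ≤ (a : EReal) * (t1 : EReal) + (b : EReal) * (t2 : EReal) := by
        gcongr
    _ = ((a * t1 + b * t2 : ℝ) : EReal) := by norm_cast


lemma clm_decomp (F : (G × ℝ) →L[ℝ] ℝ) (w : G) (t : ℝ) :
    F (w, t) = F (w, 0) + t * F (0, 1) := by
  have h : (w, t) = (w, (0:ℝ)) + t • ((0:G), (1:ℝ)) := by
    simp [Prod.ext_iff]
  rw [h, map_add, map_smul, smul_eq_mul]


/-- Core separation lemma. -/
lemma sep_core {f : G → EReal} (hp : EProper f) (hl : LowerSemicontinuous f)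
    (hc : EConvexOn f) (x : G) (s : ℝ) (hxs : ¬ f x ≤ (s : EReal)) :
    ∃ (p : G) (c : ℝ) (a : ℝ), 0 ≤ a ∧
      (∀ (w : G) (t : ℝ), f w ≤ ((t : ℝ) : EReal) → c < ⟪w, p⟫ + t * a) ∧ ⟪x, p⟫ + s * a < c := by
  have hcl : IsClosed (epiSet f) := epi_closed hl
  have hcv : Convex ℝ (epiSet f) := epi_convex hc
  have hx : (x, s) ∉ epiSet f := hxs
  obtain ⟨F, u, hFx, hFepi⟩ := geometric_hahn_banach_point_closed hcv hcl hx
  set L : G →L[ℝ] ℝ := F.comp (ContinuousLinearMap.inl ℝ G ℝ) with hL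
  set p : G := (InnerProductSpace.toDual ℝ G).symm L with hp'
  have hpw : ∀ w : G, ⟪w, p⟫ = F (w, 0) := by
    intro w
    rw [real_inner_comm]
    exact InnerProductSpace.toDual_symm_apply (𝕜 := ℝ) (E := G) (x := w) (y := L)
  set a : ℝ := F (0, 1) with ha'
  have hdec : ∀ (w : G) (t : ℝ), F (w, t) = ⟪w, p⟫ + t * a := by
    intro w t; rw [hpw w]; exact clm_decomp F w t
  have hepi : ∀ (w : G) (t : ℝ), f w ≤ ((t : ℝ) : EReal) → u < ⟪w, p⟫ + t * a := by
    intro w t hwt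
    have := hFepi (w, t) hwt
    rwa [hdec] at this
  have hxval : ⟪x, p⟫ + s * a < u := by rw [← hdec]; exact hFx
  -- a ≥ 0
  obtain ⟨x0, hx0⟩ := hp.2
  have hx0b : f x0 ≠ ⊥ := hp.1 x0
  have hx0r : f x0 = ((f x0).toReal : EReal) := (EReal.coe_toReal hx0 hx0b).symm
  have hann : 0 ≤ a := by
    by_contra hneg
    push_neg at hneg
    set t0 : ℝ := (f x0).toReal
    obtain ⟨n, hn⟩ := exists_nat_gt ((u - ⟪x0, p⟫ - t0 * a) / a)
    have hmem : f x0 ≤ ((t0 + n : ℝ) : EReal) := by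
      rw [hx0r]; exact_mod_cast le_add_of_nonneg_right (Nat.cast_nonneg n)
    have h1 : u < ⟪x0, p⟫ + (t0 + n) * a := hepi x0 (t0 + n) hmem
    have h2 : (n : ℝ) * a < u - ⟪x0, p⟫ - t0 * a := by
      rw [div_lt_iff_of_neg hneg] at hn
      linarith [hn]
    nlinarith
  exact ⟨p, u, a, hann, hepi, hxval⟩

lemma div_trick {c i T a : ℝ} (hapos : 0 < a) (h1 : c < i + T * a) : -(a⁻¹ * i) + c / a ≤ T := by
  have h4 : a * a⁻¹ = 1 := mul_inv_cancel₀ hapos.ne'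
  have h3 := mul_lt_mul_of_pos_right h1 (inv_pos.2 hapos)
  have h5 : T * (a * a⁻¹) = T := by rw [h4, mul_one]
  rw [div_eq_mul_inv]
  nlinarith [h3, h5]

lemma div_trick2 {c i s a : ℝ} (hapos : 0 < a) (h1 : i + s * a < c) : s < -(a⁻¹ * i) + c / a := by
  have h4 : a * a⁻¹ = 1 := mul_inv_cancel₀ hapos.ne'
  have h3 := mul_lt_mul_of_pos_right h1 (inv_pos.2 hapos)
  have h5 : s * (a * a⁻¹) = s := by rw [h4, mul_one]
  rw [div_eq_mul_inv]
  nlinarith [h3, h5]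


lemma exists_minorant {f : G → EReal} (hp : EProper f) (hl : LowerSemicontinuous f)
    (hc : EConvexOn f) :
    ∃ (p : G) (c : ℝ), ∀ w, ((⟪w, p⟫ + c : ℝ) : EReal) ≤ f w := by
  obtain ⟨x0, hx0⟩ := hp.2
  have hx0b : f x0 ≠ ⊥ := hp.1 x0
  have hx0r : ((f x0).toReal : EReal) = f x0 := EReal.coe_toReal hx0 hx0b
  set s : ℝ := (f x0).toReal - 1
  have hxs : ¬ f x0 ≤ (s : EReal) := by
    rw [← hx0r]
    intro h
    have : (f x0).toReal ≤ s := by exact_mod_cast h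
    simp only [s] at this; linarith
  obtain ⟨p, c, a, ha, hepi, hxval⟩ := sep_core hp hl hc x0 s hxs
  have hapos : 0 < a := by
    rcases lt_or_eq_of_le ha with h | h
    · exact h
    · exfalso
      have h1 : c < ⟪x0, p⟫ + (f x0).toReal * a := hepi x0 _ (le_of_eq hx0r.symm)
      rw [← h] at h1 hxval
      simp at h1 hxval; linarith
  refine ⟨-(a⁻¹ • p), c / a, fun w => ?_⟩
  rcases eq_or_ne (f w) ⊤ with h | h
  · rw [h]; exact le_top
  have hwb : f w ≠ ⊥ := hp.1 w
  have hwr : ((f w).toReal : EReal) = f w := EReal.coe_toReal h hwb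
  have h1 : c < ⟪w, p⟫ + (f w).toReal * a := hepi w _ (le_of_eq hwr.symm)
  rw [← hwr]
  apply EReal.coe_le_coe_iff.2
  have : ⟪w, -(a⁻¹ • p)⟫ = -(a⁻¹ * ⟪w, p⟫) := by
    rw [inner_neg_right, real_inner_smul_right]
  rw [this]
  exact div_trick hapos h1


lemma exists_minorant_gt {f : G → EReal} (hp : EProper f) (hl : LowerSemicontinuous f)
    (hc : EConvexOn f) (x : G) (s : ℝ) (hs : (s : EReal) < f x) :
    ∃ (p : G) (c : ℝ), (∀ w, ((⟪w, p⟫ + c : ℝ) : EReal) ≤ f w) ∧ s < ⟪x, p⟫ + c := by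
  have hxs : ¬ f x ≤ (s : EReal) := not_le.2 hs
  obtain ⟨p, c, a, ha, hepi, hxval⟩ := sep_core hp hl hc x s hxs
  rcases lt_or_eq_of_le ha with hapos | hzero
  · -- a > 0 : the separating hyperplane is itself (essentially) the minorant
    refine ⟨-(a⁻¹ • p), c / a, fun w => ?_, ?_⟩
    · rcases eq_or_ne (f w) ⊤ with h | h
      · rw [h]; exact le_top
      have hwb : f w ≠ ⊥ := hp.1 w
      have hwr : ((f w).toReal : EReal) = f w := EReal.coe_toReal h hwb
      have h1 : c < ⟪w, p⟫ + (f w).toReal * a := hepi w _ (le_of_eq hwr.symm)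
      rw [← hwr]
      apply EReal.coe_le_coe_iff.2
      have hi : ⟪w, -(a⁻¹ • p)⟫ = -(a⁻¹ * ⟪w, p⟫) := by
        rw [inner_neg_right, real_inner_smul_right]
      rw [hi]
      exact div_trick hapos h1
    · have hi : ⟪x, -(a⁻¹ • p)⟫ = -(a⁻¹ * ⟪x, p⟫) := by
        rw [inner_neg_right, real_inner_smul_right]
      rw [hi]
      exact div_trick2 hapos hxval
  · -- a = 0 : vertical hyperplane; tilt an existing minorant
    obtain ⟨p0, c0, hm0⟩ := exists_minorant hp hl hc
    rw [← hzero] at hepi hxval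
    simp only [mul_zero, add_zero] at hepi hxval
    -- on dom f : c < ⟪w, p⟫ ; at x : ⟪x, p⟫ < c
    set pos : ℝ := c - ⟪x, p⟫ with hpos'
    have hpos : 0 < pos := by simp only [hpos']; linarith
    set k : ℝ := max 0 ((s - (⟪x, p0⟫ + c0)) / pos + 1) with hk'
    have hk0 : 0 ≤ k := le_max_left _ _
    refine ⟨p0 + k • (-p), c0 + k * c, fun w => ?_, ?_⟩
    · rcases eq_or_ne (f w) ⊤ with h | h
      · rw [h]; exact le_top
      have hwb : f w ≠ ⊥ := hp.1 w
      have hwr : ((f w).toReal : EReal) = f w := EReal.coe_toReal h hwb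
      have h1 : c < ⟪w, p⟫ := hepi w _ (le_of_eq hwr.symm)
      have h2 : ((⟪w, p0⟫ + c0 : ℝ) : EReal) ≤ f w := hm0 w
      rw [← hwr] at h2 ⊢
      have h2' : ⟪w, p0⟫ + c0 ≤ (f w).toReal := by exact_mod_cast h2
      apply EReal.coe_le_coe_iff.2
      have hi : ⟪w, p0 + k • (-p)⟫ = ⟪w, p0⟫ - k * ⟪w, p⟫ := by
        rw [inner_add_right, inner_smul_right, inner_neg_right]; ring
      rw [hi]
      nlinarith [mul_le_mul_of_nonneg_left (le_of_lt h1) hk0]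
    · have hi : ⟪x, p0 + k • (-p)⟫ = ⟪x, p0⟫ - k * ⟪x, p⟫ := by
        rw [inner_add_right, inner_smul_right, inner_neg_right]; ring
      rw [hi]
      have hk2 : (s - (⟪x, p0⟫ + c0)) / pos + 1 ≤ k := le_max_right _ _
      have : (s - (⟪x, p0⟫ + c0)) / pos < k := by linarith
      rw [div_lt_iff₀ hpos] at this
      simp only [hpos'] at this
      nlinarith

open Filter Topology


lemma lim_real (F : Ultrafilter ℕ) (s : ℕ → ℝ) (C : ℝ) (h : ∀ n, |s n| ≤ C) :
    ∃ r : ℝ, Tendsto s (F : Filter ℕ) (𝓝 r) := by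
  have hle : (F.map s : Filter ℝ) ≤ Filter.principal (Set.Icc (-C) C) := by
    rw [Filter.le_principal_iff]
    have : ∀ n, s n ∈ Set.Icc (-C) C := fun n => abs_le.1 (h n)
    exact Filter.mem_map.2 (Filter.univ_mem' this)
  obtain ⟨r, _, hr⟩ := (isCompact_Icc (a := -C) (b := C)).ultrafilter_le_nhds (F.map s) hle
  exact ⟨r, hr⟩


lemma bdd_of_inner_upper [CompleteSpace G] (y : ℕ → G)
    (h : ∀ p : G, ∃ C : ℝ, ∀ n, ⟪y n, p⟫ ≤ C) : ∃ C : ℝ, ∀ n, ‖y n‖ ≤ C := by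
  have hpt : ∀ p : G, ∃ C : ℝ, ∀ n, ‖(innerSL ℝ (y n)) p‖ ≤ C := by
    intro p
    obtain ⟨C1, h1⟩ := h p
    obtain ⟨C2, h2⟩ := h (-p)
    refine ⟨max C1 C2, fun n => ?_⟩
    rw [Real.norm_eq_abs, abs_le]
    constructor
    · have := h2 n
      rw [inner_neg_right] at this
      simp only [innerSL_apply_apply]
      have : -(max C1 C2) ≤ -C2 := neg_le_neg (le_max_right _ _)
      linarith [h2 n, inner_neg_right (𝕜 := ℝ) (y n) p]
    · exact le_trans (h1 n) (le_max_left _ _)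
  obtain ⟨C', hC'⟩ := banach_steinhaus hpt
  exact ⟨C', fun n => by rw [← innerSL_apply_norm (𝕜 := ℝ) (y n)]; exact hC' n⟩


lemma weak_limit [CompleteSpace G] (F : Ultrafilter ℕ) (y : ℕ → G) (C : ℝ)
    (h : ∀ n, ‖y n‖ ≤ C) :
    ∃ z : G, ∀ p : G, Tendsto (fun n => ⟪y n, p⟫) (F : Filter ℕ) (𝓝 ⟪z, p⟫) := by
  have hbound : ∀ p : G, ∀ n, |⟪y n, p⟫| ≤ C * ‖p‖ := fun p n =>
    le_trans (abs_real_inner_le_norm (y n) p)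
      (mul_le_mul_of_nonneg_right (h n) (norm_nonneg p))
  choose φ hφ using fun p : G => lim_real F (fun n => ⟪y n, p⟫) (C * ‖p‖) (hbound p)
  have hadd : ∀ p q : G, φ (p + q) = φ p + φ q := by
    intro p q
    have h1 : Tendsto (fun n => ⟪y n, p + q⟫) (F : Filter ℕ) (𝓝 (φ p + φ q)) := by
      have := (hφ p).add (hφ q)
      simpa [inner_add_right] using this
    exact tendsto_nhds_unique (hφ (p + q)) h1
  have hsmul : ∀ (a : ℝ) (p : G), φ (a • p) = a * φ p := by
    intro a p
    have h1 : Tendsto (fun n => ⟪y n, a • p⟫) (F : Filter ℕ) (𝓝 (a * φ p)) := by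
      have := (hφ p).const_mul a
      simpa [real_inner_smul_right] using this
    exact tendsto_nhds_unique (hφ (a • p)) h1
  have hφb : ∀ p : G, ‖φ p‖ ≤ C * ‖p‖ := by
    intro p
    rw [Real.norm_eq_abs]
    exact le_of_tendsto' (hφ p).abs (fun n => hbound p n)
  set Φ : G →ₗ[ℝ] ℝ :=
    { toFun := φ
      map_add' := hadd
      map_smul' := by intro a p; simpa using hsmul a p }
  set ΦL : G →L[ℝ] ℝ := Φ.mkContinuous C hφb
  refine ⟨(InnerProductSpace.toDual ℝ G).symm ΦL, fun p => ?_⟩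
  rw [InnerProductSpace.toDual_symm_apply]
  exact hφ p


lemma lminor {ℓ : G → EReal} (hdom : ∀ u, EConj ℓ u ≠ ⊤) (u : G) :
    ∃ d : ℝ, ∀ w, ((⟪w, u⟫ - d : ℝ) : EReal) ≤ ℓ w := by
  have he : EConj ℓ u < ⊤ := lt_top_iff_ne_top.2 (hdom u)
  obtain ⟨q, hq1, _⟩ := EReal.exists_rat_btwn_of_lt he
  refine ⟨q, fun w => ?_⟩
  have hw : ((⟪w, u⟫ : ℝ) : EReal) - ℓ w ≤ ((q : ℝ) : EReal) := by
    refine le_of_lt (lt_of_le_of_lt ?_ hq1)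
    exact le_iSup (fun x : G => ((⟪x, u⟫ : ℝ) : EReal) - ℓ x) w
  rcases eq_or_ne (ℓ w) ⊤ with h | h
  · rw [h]; exact le_top
  rcases eq_or_ne (ℓ w) ⊥ with h' | h'
  · exfalso
    rw [h', EReal.coe_sub_bot] at hw
    exact absurd (lt_of_le_of_lt hw (EReal.coe_lt_top (q : ℝ))) (lt_irrefl ⊤)
  have hwr : ((ℓ w).toReal : EReal) = ℓ w := EReal.coe_toReal h h'
  rw [← hwr] at hw ⊢
  have : ⟪w, u⟫ - (ℓ w).toReal ≤ (q : ℝ) := by exact_mod_cast hw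
  exact_mod_cast (by linarith : ⟪w, u⟫ - (q : ℝ) ≤ (ℓ w).toReal)


open Filter Topology in

/-- The key compactness lemma. -/
lemma key_lemma {g ℓ : G → EReal}
    (hgp : EProper g) (hgl : LowerSemicontinuous g) (hgc : EConvexOn g)
    (hlp : EProper ℓ) (hll : LowerSemicontinuous ℓ) (hlc : EConvexOn ℓ)
    (hdom : ∀ u, EConj ℓ u ≠ ⊤)
    (x : ℕ → G) (x' : G) (hx : Tendsto x atTop (𝓝 x'))
    (y : ℕ → G) (s t r : ℕ → ℝ) (r' : ℝ) (hr : Tendsto r atTop (𝓝 r'))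
    (hgs : ∀ n, g (y n) ≤ ((s n : ℝ) : EReal))
    (hlt : ∀ n, ℓ (x n - y n) ≤ ((t n : ℝ) : EReal))
    (hst : ∀ n, s n + t n ≤ r n) :
    ∃ z : G, g z + ℓ (x' - z) ≤ (r' : EReal) := by
  obtain ⟨p0, c0, hm0⟩ := exists_minorant hgp hgl hgc
  -- bound on r
  obtain ⟨R, hR⟩ := hr.bddAbove_range
  have hRr : ∀ n, r n ≤ R := fun n => hR (Set.mem_range_self n)
  -- bound on ‖x n‖
  obtain ⟨K, hK⟩ := (hx.norm).bddAbove_range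
  have hKx : ∀ n, ‖x n‖ ≤ K := fun n => hK (Set.mem_range_self n)
  -- lower bounds become real inequalities
  have hsl : ∀ n, ⟪y n, p0⟫ + c0 ≤ s n := by
    intro n
    exact_mod_cast le_trans (hm0 (y n)) (hgs n)
  -- uniform upper inner bounds on y
  have hupper : ∀ p : G, ∃ C : ℝ, ∀ n, ⟪y n, p⟫ ≤ C := by
    intro p
    obtain ⟨d, hd⟩ := lminor hdom (p0 - p)
    refine ⟨R - c0 + d + K * ‖p0 - p‖, fun n => ?_⟩
    have htl : ⟪x n - y n, p0 - p⟫ - d ≤ t n := by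
      exact_mod_cast le_trans (hd (x n - y n)) (hlt n)
    have hxn : -(K * ‖p0 - p‖) ≤ ⟪x n, p0 - p⟫ := by
      have h1 : |⟪x n, p0 - p⟫| ≤ ‖x n‖ * ‖p0 - p‖ := abs_real_inner_le_norm _ _
      have h2 : ‖x n‖ * ‖p0 - p‖ ≤ K * ‖p0 - p‖ :=
        mul_le_mul_of_nonneg_right (hKx n) (norm_nonneg _)
      have := abs_le.1 (le_trans h1 h2)
      linarith [this.1]
    have hsplit : ⟪x n - y n, p0 - p⟫ = ⟪x n, p0 - p⟫ - ⟪y n, p0 - p⟫ := inner_sub_left _ _ _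
    have hyp : ⟪y n, p0 - p⟫ = ⟪y n, p0⟫ - ⟪y n, p⟫ := inner_sub_right _ _ _
    have hsum := hst n
    have hrn := hRr n
    have h3 := hsl n
    rw [hsplit, hyp] at htl
    linarith
  obtain ⟨Cy, hCy⟩ := bdd_of_inner_upper y hupper
  have hCy0 : 0 ≤ Cy := le_trans (norm_nonneg (y 0)) (hCy 0)
  -- bounds on s and t
  obtain ⟨d0, hd0⟩ := lminor hdom 0
  have hA : ∀ n, c0 - Cy * ‖p0‖ ≤ s n := by
    intro n
    have h1 : |⟪y n, p0⟫| ≤ Cy * ‖p0‖ :=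
      le_trans (abs_real_inner_le_norm _ _) (mul_le_mul_of_nonneg_right (hCy n) (norm_nonneg _))
    have := abs_le.1 h1
    linarith [hsl n, this.1]
  have hB : ∀ n, -d0 ≤ t n := by
    intro n
    have := hd0 (x n - y n)
    simp only [inner_zero_right, zero_sub] at this
    exact_mod_cast le_trans this (hlt n)
  have hsabs : ∀ n, |s n| ≤ max (|c0 - Cy * ‖p0‖|) (|R + d0|) := by
    intro n
    rw [abs_le]
    constructor
    · linarith [hA n, neg_abs_le (c0 - Cy * ‖p0‖), le_max_left (|c0 - Cy * ‖p0‖|) (|R + d0|)]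
    · have : s n ≤ R + d0 := by linarith [hst n, hB n, hRr n]
      linarith [le_abs_self (R + d0), le_max_right (|c0 - Cy * ‖p0‖|) (|R + d0|)]
  have htabs : ∀ n, |t n| ≤ max (|d0|) (|R - (c0 - Cy * ‖p0‖)|) := by
    intro n
    rw [abs_le]
    constructor
    · linarith [hB n, le_abs_self d0, le_max_left (|d0|) (|R - (c0 - Cy * ‖p0‖)|)]
    · have : t n ≤ R - (c0 - Cy * ‖p0‖) := by linarith [hst n, hA n, hRr n]
      linarith [le_abs_self (R - (c0 - Cy * ‖p0‖)),
        le_max_right (|d0|) (|R - (c0 - Cy * ‖p0‖)|)]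
  -- the ultrafilter
  set F : Ultrafilter ℕ := Ultrafilter.of atTop with hF'
  have hF : (F : Filter ℕ) ≤ atTop := Ultrafilter.of_le atTop
  obtain ⟨s', hs'⟩ := lim_real F s _ hsabs
  obtain ⟨t', ht'⟩ := lim_real F t _ htabs
  have hr' : Tendsto r (F : Filter ℕ) (𝓝 r') := hr.mono_left hF
  have hx' : Tendsto x (F : Filter ℕ) (𝓝 x') := hx.mono_left hF
  have hst' : s' + t' ≤ r' := le_of_tendsto_of_tendsto' (hs'.add ht') hr' hst
  obtain ⟨z, hz⟩ := weak_limit F y Cy hCy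
  -- g z ≤ s'
  have hgz : g z ≤ (s' : EReal) := by
    by_contra hcon
    push_neg at hcon
    obtain ⟨p, c, hm, hgt⟩ := exists_minorant_gt hgp hgl hgc z s' hcon
    have hle : ∀ n, ⟪y n, p⟫ + c ≤ s n := by
      intro n
      exact_mod_cast le_trans (hm (y n)) (hgs n)
    have : ⟪z, p⟫ + c ≤ s' :=
      le_of_tendsto_of_tendsto' ((hz p).add tendsto_const_nhds) hs' hle
    linarith
  -- ℓ (x' - z) ≤ t'
  have hlz : ℓ (x' - z) ≤ (t' : EReal) := by
    by_contra hcon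
    push_neg at hcon
    obtain ⟨p, c, hm, hgt⟩ := exists_minorant_gt hlp hll hlc (x' - z) t' hcon
    have hle : ∀ n, ⟪x n - y n, p⟫ + c ≤ t n := by
      intro n
      exact_mod_cast le_trans (hm (x n - y n)) (hlt n)
    have htend : Tendsto (fun n => ⟪x n - y n, p⟫ + c) (F : Filter ℕ) (𝓝 (⟪x' - z, p⟫ + c)) := by
      have h1 : Tendsto (fun n => ⟪x n, p⟫) (F : Filter ℕ) (𝓝 ⟪x', p⟫) :=
        hx'.inner tendsto_const_nhds
      have h2 := (h1.sub (hz p)).add (tendsto_const_nhds (x := c))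
      have heq : ∀ n, ⟪x n - y n, p⟫ + c = ⟪x n, p⟫ - ⟪y n, p⟫ + c := by
        intro n; rw [inner_sub_left]
      have heq2 : ⟪x' - z, p⟫ + c = ⟪x', p⟫ - ⟪z, p⟫ + c := by rw [inner_sub_left]
      rw [heq2]
      simpa [heq] using h2
    have : ⟪x' - z, p⟫ + c ≤ t' := le_of_tendsto_of_tendsto' htend ht' hle
    linarith
  refine ⟨z, ?_⟩
  calc g z + ℓ (x' - z) ≤ (s' : EReal) + (t' : EReal) := add_le_add hgz hlz
    _ = ((s' + t' : ℝ) : EReal) := by norm_cast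
    _ ≤ (r' : EReal) := by exact_mod_cast hst'


lemma ereal_add_coe_cancel {a b : EReal} (r : ℝ) (h : a + (r : EReal) ≤ b + (r : EReal)) :
    a ≤ b := by
  have h2 : a + (r : EReal) - (r : EReal) ≤ b + (r : EReal) - (r : EReal) :=
    EReal.sub_le_sub h (le_refl _)
  rwa [EReal.add_sub_cancel_right, EReal.add_sub_cancel_right] at h2


lemma le_coe_of_forall_pos {X : EReal} {m : ℝ}
    (h : ∀ ε : ℝ, 0 < ε → X ≤ ((m + ε : ℝ) : EReal)) : X ≤ (m : EReal) := by
  rcases eq_or_ne X ⊥ with rfl | hb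
  · exact bot_le
  rcases eq_or_ne X ⊤ with rfl | ht
  · exact ((EReal.coe_lt_top (m + 1)).not_ge (h 1 one_pos)).elim
  have hXr : ((X.toReal : ℝ) : EReal) = X := EReal.coe_toReal ht hb
  rw [← hXr, EReal.coe_le_coe_iff]
  by_contra hcon
  push_neg at hcon
  have := h ((X.toReal - m) / 2) (by linarith)
  rw [← hXr, EReal.coe_le_coe_iff] at this
  simp only [EReal.toReal_coe] at this
  linarith


/-- Select a near-minimizing decomposition. -/
lemma select {g ℓ : G → EReal} (hgp : EProper g) (hlp : EProper ℓ) (w : G) (c : ℝ)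
    (h : EInfConv g ℓ w < (c : EReal)) :
    ∃ (y : G) (sv tv : ℝ), g y = (sv : EReal) ∧ ℓ (w - y) = (tv : EReal) ∧ sv + tv < c := by
  rw [EInfConv, iInf_lt_iff] at h
  obtain ⟨y, hy⟩ := h
  have hgb : g y ≠ ⊥ := hgp.1 y
  have hlb : ℓ (w - y) ≠ ⊥ := hlp.1 (w - y)
  have hgt : g y ≠ ⊤ := by
    intro hT
    rw [hT, EReal.top_add_of_ne_bot hlb] at hy
    exact absurd hy (by simp)
  have hlt : ℓ (w - y) ≠ ⊤ := by
    intro hT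
    rw [hT, EReal.add_top_of_ne_bot hgb] at hy
    exact absurd hy (by simp)
  refine ⟨y, (g y).toReal, (ℓ (w - y)).toReal, (EReal.coe_toReal hgt hgb).symm,
    (EReal.coe_toReal hlt hlb).symm, ?_⟩
  rw [← EReal.coe_toReal hgt hgb, ← EReal.coe_toReal hlt hlb] at hy
  exact_mod_cast hy


/-- Lower bound for the infimal convolution. -/
lemma infconv_lower {g ℓ : G → EReal}
    (hgp : EProper g) (hgl : LowerSemicontinuous g) (hgc : EConvexOn g)
    (hdom : ∀ u, EConj ℓ u ≠ ⊤) :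
    ∃ (p : G) (e : ℝ), ∀ x, ((⟪x, p⟫ + e : ℝ) : EReal) ≤ EInfConv g ℓ x := by
  obtain ⟨p0, c0, hm0⟩ := exists_minorant hgp hgl hgc
  obtain ⟨d, hd⟩ := lminor hdom p0
  refine ⟨p0, c0 - d, fun x => le_iInf fun y => ?_⟩
  calc ((⟪x, p0⟫ + (c0 - d) : ℝ) : EReal)
      = ((⟪y, p0⟫ + c0 : ℝ) : EReal) + ((⟪x - y, p0⟫ - d : ℝ) : EReal) := by
        rw [← EReal.coe_add]
        norm_cast
        rw [inner_sub_left]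
        ring
    _ ≤ g y + ℓ (x - y) := add_le_add (hm0 y) (hd (x - y))


lemma infconv_ne_bot {g ℓ : G → EReal}
    (hgp : EProper g) (hgl : LowerSemicontinuous g) (hgc : EConvexOn g)
    (hdom : ∀ u, EConj ℓ u ≠ ⊤) (x : G) : EInfConv g ℓ x ≠ ⊥ := by
  obtain ⟨p, e, hpe⟩ := infconv_lower hgp hgl hgc hdom
  intro hb
  have := hpe x
  rw [hb] at this
  exact absurd this (by simp)


open Filter Topology in

/-- Attainment of the infimal convolution. -/
lemma infconv_attained {g ℓ : G → EReal}
    (hgp : EProper g) (hgl : LowerSemicontinuous g) (hgc : EConvexOn g)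
    (hlp : EProper ℓ) (hll : LowerSemicontinuous ℓ) (hlc : EConvexOn ℓ)
    (hdom : ∀ u, EConj ℓ u ≠ ⊤) (x : G) (hfx : EInfConv g ℓ x ≠ ⊤) :
    ∃ z : G, g z + ℓ (x - z) = EInfConv g ℓ x := by
  have hfb : EInfConv g ℓ x ≠ ⊥ := infconv_ne_bot hgp hgl hgc hdom x
  set μ : ℝ := (EInfConv g ℓ x).toReal with hμ'
  have hμ : ((μ : ℝ) : EReal) = EInfConv g ℓ x := EReal.coe_toReal hfx hfb
  have hsel : ∀ n : ℕ, ∃ (y : G) (sv tv : ℝ),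
      g y = (sv : EReal) ∧ ℓ (x - y) = (tv : EReal) ∧ sv + tv < μ + 1 / (n + 1) := by
    intro n
    apply select hgp hlp
    rw [← hμ]
    apply EReal.coe_lt_coe_iff.2
    have hpos : (0:ℝ) < 1 / (n + 1) := by positivity
    linarith
  choose y s t hgs hlt hst using hsel
  have hr : Tendsto (fun n : ℕ => μ + 1 / (n + 1 : ℝ)) atTop (𝓝 μ) := by
    have := tendsto_one_div_add_atTop_nhds_zero_nat (𝕜 := ℝ)
    simpa using (tendsto_const_nhds (x := μ)).add this
  obtain ⟨z, hz⟩ := key_lemma hgp hgl hgc hlp hll hlc hdom (fun _ => x) x tendsto_const_nhds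
    y s t _ μ hr (fun n => (hgs n).le) (fun n => (hlt n).le) (fun n => (hst n).le)
  rw [hμ] at hz
  exact ⟨z, le_antisymm hz (iInf_le _ z)⟩


open Filter Topology in

lemma infconv_lsc {g ℓ : G → EReal}
    (hgp : EProper g) (hgl : LowerSemicontinuous g) (hgc : EConvexOn g)
    (hlp : EProper ℓ) (hll : LowerSemicontinuous ℓ) (hlc : EConvexOn ℓ)
    (hdom : ∀ u, EConj ℓ u ≠ ⊤) : LowerSemicontinuous (EInfConv g ℓ) := by
  intro x b hb
  rcases eq_or_ne b ⊥ with rfl | hbb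
  · exact Filter.Eventually.of_forall fun x' =>
      bot_lt_iff_ne_bot.2 (infconv_ne_bot hgp hgl hgc hdom x')
  have hbt : b ≠ ⊤ := ne_top_of_lt hb
  have hbr : ((b.toReal : ℝ) : EReal) = b := EReal.coe_toReal hbt hbb
  set β : ℝ := b.toReal with hβ'
  by_contra hcon
  have hfreq : ∃ᶠ x' in 𝓝 x, EInfConv g ℓ x' ≤ b := by
    rw [Filter.not_eventually] at hcon
    exact hcon.mono fun x' h => not_lt.1 h
  have hsel : ∀ n : ℕ, ∃ x', dist x' x < 1 / (n + 1) ∧ EInfConv g ℓ x' ≤ b := by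
    intro n
    have hball : Metric.ball x (1 / (n + 1)) ∈ 𝓝 x :=
      Metric.ball_mem_nhds x (by positivity)
    obtain ⟨x', hx1, hx2⟩ := Filter.frequently_iff.1 hfreq hball
    exact ⟨x', Metric.mem_ball.1 hx1, hx2⟩
  choose xs hxd hxf using hsel
  have hxs : Tendsto xs atTop (𝓝 x) := by
    rw [tendsto_iff_dist_tendsto_zero]
    refine squeeze_zero (fun n => dist_nonneg) (fun n => (hxd n).le) ?_
    exact tendsto_one_div_add_atTop_nhds_zero_nat
  have hsel2 : ∀ n : ℕ, ∃ (y : G) (sv tv : ℝ),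
      g y = (sv : EReal) ∧ ℓ (xs n - y) = (tv : EReal) ∧ sv + tv < β + 1 / (n + 1) := by
    intro n
    apply select hgp hlp
    refine lt_of_le_of_lt (hxf n) ?_
    rw [← hbr]
    apply EReal.coe_lt_coe_iff.2
    have hpos : (0:ℝ) < 1 / (n + 1) := by positivity
    linarith
  choose y s t hgs hlt hst using hsel2
  have hr : Tendsto (fun n : ℕ => β + 1 / (n + 1 : ℝ)) atTop (𝓝 β) := by
    have := tendsto_one_div_add_atTop_nhds_zero_nat (𝕜 := ℝ)
    simpa using (tendsto_const_nhds (x := β)).add this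
  obtain ⟨z, hz⟩ := key_lemma hgp hgl hgc hlp hll hlc hdom xs x hxs
    y s t _ β hr (fun n => (hgs n).le) (fun n => (hlt n).le) (fun n => (hst n).le)
  have : EInfConv g ℓ x ≤ b := by
    rw [← hbr]
    exact le_trans (iInf_le _ z) hz
  exact absurd hb (not_lt.2 this)


lemma coe_mul_ne_bot (b : ℝ) (hb : 0 ≤ b) {v : EReal} (hv : v ≠ ⊥) : (b : EReal) * v ≠ ⊥ := by
  rcases eq_or_lt_of_le hb with h | hbpos
  · rw [← h]; simp
  rcases eq_or_ne v ⊤ with h | h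
  · rw [h, EReal.coe_mul_top_of_pos hbpos]; exact top_ne_bot
  rw [← EReal.coe_toReal h hv, ← EReal.coe_mul]
  exact EReal.coe_ne_bot _


lemma infconv_convex {g ℓ : G → EReal}
    (hgp : EProper g) (hgl : LowerSemicontinuous g) (hgc : EConvexOn g)
    (hlp : EProper ℓ) (hll : LowerSemicontinuous ℓ) (hlc : EConvexOn ℓ)
    (hdom : ∀ u, EConj ℓ u ≠ ⊤) : EConvexOn (EInfConv g ℓ) := by
  intro x1 x2 a b ha hb hab
  rcases eq_or_lt_of_le ha with h0 | hapos
  · have hb1 : b = 1 := by linarith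
    rw [← h0, hb1]
    norm_num
  rcases eq_or_lt_of_le hb with h0 | hbpos
  · have ha1 : a = 1 := by linarith
    rw [← h0, ha1]
    norm_num
  have hfb1 : EInfConv g ℓ x1 ≠ ⊥ := infconv_ne_bot hgp hgl hgc hdom x1
  have hfb2 : EInfConv g ℓ x2 ≠ ⊥ := infconv_ne_bot hgp hgl hgc hdom x2
  rcases eq_or_ne (EInfConv g ℓ x1) ⊤ with h1 | h1
  · rw [h1, EReal.coe_mul_top_of_pos hapos,
      EReal.top_add_of_ne_bot (coe_mul_ne_bot b hb hfb2)]
    exact le_top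
  rcases eq_or_ne (EInfConv g ℓ x2) ⊤ with h2 | h2
  · rw [h2, EReal.coe_mul_top_of_pos hbpos,
      EReal.add_top_of_ne_bot (coe_mul_ne_bot a ha hfb1)]
    exact le_top
  set μ1 : ℝ := (EInfConv g ℓ x1).toReal with hμ1'
  set μ2 : ℝ := (EInfConv g ℓ x2).toReal with hμ2'
  have hμ1 : ((μ1 : ℝ) : EReal) = EInfConv g ℓ x1 := EReal.coe_toReal h1 hfb1
  have hμ2 : ((μ2 : ℝ) : EReal) = EInfConv g ℓ x2 := EReal.coe_toReal h2 hfb2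
  rw [← hμ1, ← hμ2]
  have hco : (a : EReal) * ((μ1 : ℝ) : EReal) + (b : EReal) * ((μ2 : ℝ) : EReal)
      = ((a * μ1 + b * μ2 : ℝ) : EReal) := by norm_cast
  rw [hco]
  apply le_coe_of_forall_pos
  intro ε hε
  obtain ⟨y1, s1, t1, hg1, hl1, hst1⟩ := select hgp hlp x1 (μ1 + ε)
    (by rw [← hμ1]; exact EReal.coe_lt_coe_iff.2 (by linarith))
  obtain ⟨y2, s2, t2, hg2, hl2, hst2⟩ := select hgp hlp x2 (μ2 + ε)
    (by rw [← hμ2]; exact EReal.coe_lt_coe_iff.2 (by linarith))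
  have harg : (a • x1 + b • x2) - (a • y1 + b • y2) = a • (x1 - y1) + b • (x2 - y2) := by
    rw [smul_sub, smul_sub]; abel
  have hε1 : a * ε + b * ε = ε := by rw [← add_mul, hab, one_mul]
  calc EInfConv g ℓ (a • x1 + b • x2)
      ≤ g (a • y1 + b • y2) + ℓ ((a • x1 + b • x2) - (a • y1 + b • y2)) :=
        iInf_le _ _
    _ = g (a • y1 + b • y2) + ℓ (a • (x1 - y1) + b • (x2 - y2)) := by rw [harg]
    _ ≤ ((a : EReal) * g y1 + (b : EReal) * g y2) +
        ((a : EReal) * ℓ (x1 - y1) + (b : EReal) * ℓ (x2 - y2)) :=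
        add_le_add (hgc y1 y2 a b ha hb hab) (hlc (x1 - y1) (x2 - y2) a b ha hb hab)
    _ = ((a * s1 + b * s2 + (a * t1 + b * t2) : ℝ) : EReal) := by
        rw [hg1, hg2, hl1, hl2]; norm_cast
    _ ≤ ((a * μ1 + b * μ2 + ε : ℝ) : EReal) := by
        apply EReal.coe_le_coe_iff.2
        nlinarith [mul_le_mul_of_nonneg_left hst1.le ha, mul_le_mul_of_nonneg_left hst2.le hb]


lemma parSum_subset_subdiff {g ℓ : G → EReal}
    (hgp : EProper g) (hgl : LowerSemicontinuous g) (hgc : EConvexOn g)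
    (hlp : EProper ℓ) (hll : LowerSemicontinuous ℓ) (hlc : EConvexOn ℓ)
    (hdom : ∀ u, EConj ℓ u ≠ ⊤) (x : G) :
    parSum (ESubdiff g) (ESubdiff ℓ) x ⊆ ESubdiff (EInfConv g ℓ) x := by
  rintro u ⟨p, hp, q, hq, hpq⟩
  -- hp : u ∈ ESubdiff g p, hq : u ∈ ESubdiff ℓ q, hpq : p + q = x
  have hgb : g p ≠ ⊥ := hgp.1 p
  have hlb : ℓ q ≠ ⊥ := hlp.1 q
  have hgt : g p ≠ ⊤ := by
    intro hT
    obtain ⟨w0, hw0⟩ := hgp.2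
    have := hp w0
    rw [hT, EReal.top_add_of_ne_bot (EReal.coe_ne_bot _)] at this
    exact hw0 (top_le_iff.1 this)
  have hlt : ℓ q ≠ ⊤ := by
    intro hT
    obtain ⟨w0, hw0⟩ := hlp.2
    have := hq w0
    rw [hT, EReal.top_add_of_ne_bot (EReal.coe_ne_bot _)] at this
    exact hw0 (top_le_iff.1 this)
  set α : ℝ := (g p).toReal with hα'
  set τ : ℝ := (ℓ q).toReal with hτ'
  have hα : ((α : ℝ) : EReal) = g p := EReal.coe_toReal hgt hgb
  have hτ : ((τ : ℝ) : EReal) = ℓ q := EReal.coe_toReal hlt hlb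
  have hfx : EInfConv g ℓ x ≤ ((α + τ : ℝ) : EReal) := by
    have harg : x - p = q := by rw [← hpq]; abel
    have := iInf_le (fun y => g y + ℓ (x - y)) p
    rw [harg, ← hα, ← hτ] at this
    exact le_trans this (by norm_cast)
  intro w
  apply le_iInf
  intro c
  have hgc' : ((α + ⟪c - p, u⟫ : ℝ) : EReal) ≤ g c := by
    have := hp c
    rwa [← hα, ← EReal.coe_add] at this
  have hlc' : ((τ + ⟪(w - c) - q, u⟫ : ℝ) : EReal) ≤ ℓ (w - c) := by
    have := hq (w - c)
    rwa [← hτ, ← EReal.coe_add] at this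
  have hinner : ⟪c - p, u⟫ + ⟪(w - c) - q, u⟫ = ⟪w - x, u⟫ := by
    rw [← inner_add_left]
    congr 1
    rw [← hpq]; abel
  calc EInfConv g ℓ x + ((⟪w - x, u⟫ : ℝ) : EReal)
      ≤ ((α + τ : ℝ) : EReal) + ((⟪w - x, u⟫ : ℝ) : EReal) := add_le_add hfx le_rfl
    _ = ((α + ⟪c - p, u⟫ : ℝ) : EReal) + ((τ + ⟪(w - c) - q, u⟫ : ℝ) : EReal) := by
        rw [← EReal.coe_add, ← EReal.coe_add]
        exact congrArg Real.toEReal (by rw [← hinner]; ring)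
    _ ≤ g c + ℓ (w - c) := add_le_add hgc' hlc'


lemma subdiff_subset_parSum {g ℓ : G → EReal}
    (hgp : EProper g) (hgl : LowerSemicontinuous g) (hgc : EConvexOn g)
    (hlp : EProper ℓ) (hll : LowerSemicontinuous ℓ) (hlc : EConvexOn ℓ)
    (hdom : ∀ u, EConj ℓ u ≠ ⊤) (x : G) :
    ESubdiff (EInfConv g ℓ) x ⊆ parSum (ESubdiff g) (ESubdiff ℓ) x := by
  intro u hu
  have hfb : EInfConv g ℓ x ≠ ⊥ := infconv_ne_bot hgp hgl hgc hdom x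
  have hft : EInfConv g ℓ x ≠ ⊤ := by
    intro hT
    obtain ⟨y0, hy0⟩ := hgp.2
    obtain ⟨z0, hz0⟩ := hlp.2
    have hne : EInfConv g ℓ (y0 + z0) ≠ ⊤ := by
      have harg : y0 + z0 - y0 = z0 := by abel
      have h1 : EInfConv g ℓ (y0 + z0) ≤ g y0 + ℓ z0 := by
        have := iInf_le (fun y => g y + ℓ (y0 + z0 - y)) y0
        rwa [harg] at this
      exact ne_top_of_le_ne_top (EReal.add_lt_top hy0 hz0).ne h1
    have := hu (y0 + z0)
    rw [hT, EReal.top_add_of_ne_bot (EReal.coe_ne_bot _)] at this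
    exact hne (top_le_iff.1 this)
  obtain ⟨z, hz⟩ := infconv_attained hgp hgl hgc hlp hll hlc hdom x hft
  have hgb : g z ≠ ⊥ := hgp.1 z
  have hlb : ℓ (x - z) ≠ ⊥ := hlp.1 (x - z)
  have hgt : g z ≠ ⊤ := by
    intro hT
    rw [hT, EReal.top_add_of_ne_bot hlb] at hz
    exact hft hz.symm
  have hlt : ℓ (x - z) ≠ ⊤ := by
    intro hT
    rw [hT, EReal.add_top_of_ne_bot hgb] at hz
    exact hft hz.symm
  set σ : ℝ := (g z).toReal with hσ'
  set τ : ℝ := (ℓ (x - z)).toReal with hτ'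
  have hσ : ((σ : ℝ) : EReal) = g z := EReal.coe_toReal hgt hgb
  have hτ : ((τ : ℝ) : EReal) = ℓ (x - z) := EReal.coe_toReal hlt hlb
  refine ⟨z, ?_, x - z, ?_, by abel⟩
  · -- u ∈ ESubdiff g z
    intro w
    have h1 := hu (x + (w - z))
    have harg1 : x + (w - z) - x = w - z := by abel
    rw [harg1] at h1
    have h2 : EInfConv g ℓ (x + (w - z)) ≤ g w + ℓ (x - z) := by
      have := iInf_le (fun y => g y + ℓ (x + (w - z) - y)) w
      have harg2 : x + (w - z) - w = x - z := by abel
      rwa [harg2] at this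
    have h3 : (g z + ℓ (x - z)) + ((⟪w - z, u⟫ : ℝ) : EReal) ≤ g w + ℓ (x - z) := by
      rw [hz]; exact le_trans h1 h2
    rw [← hτ] at h3
    have h4 : (g z + ((⟪w - z, u⟫ : ℝ) : EReal)) + ((τ : ℝ) : EReal)
        ≤ g w + ((τ : ℝ) : EReal) := by
      calc (g z + ((⟪w - z, u⟫ : ℝ) : EReal)) + ((τ : ℝ) : EReal)
          = (g z + ((τ : ℝ) : EReal)) + ((⟪w - z, u⟫ : ℝ) : EReal) := add_right_comm _ _ _
        _ ≤ g w + ((τ : ℝ) : EReal) := h3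
    exact ereal_add_coe_cancel τ h4
  · -- u ∈ ESubdiff ℓ (x - z)
    intro w
    have h1 := hu (z + w)
    have h2 : EInfConv g ℓ (z + w) ≤ g z + ℓ w := by
      have := iInf_le (fun y => g y + ℓ (z + w - y)) z
      have harg2 : z + w - z = w := by abel
      rwa [harg2] at this
    have harg1 : z + w - x = w - (x - z) := by abel
    rw [harg1] at h1
    have h3 : (g z + ℓ (x - z)) + ((⟪w - (x - z), u⟫ : ℝ) : EReal) ≤ g z + ℓ w := by
      rw [hz]; exact le_trans h1 h2
    rw [← hσ] at h3
    have h4 : (ℓ (x - z) + ((⟪w - (x - z), u⟫ : ℝ) : EReal)) + ((σ : ℝ) : EReal)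
        ≤ ℓ w + ((σ : ℝ) : EReal) := by
      calc (ℓ (x - z) + ((⟪w - (x - z), u⟫ : ℝ) : EReal)) + ((σ : ℝ) : EReal)
          = (((σ : ℝ) : EReal) + ℓ (x - z)) + ((⟪w - (x - z), u⟫ : ℝ) : EReal) := by
            rw [add_right_comm, add_comm (ℓ (x - z))]
        _ ≤ ℓ w + ((σ : ℝ) : EReal) := by rw [add_comm (ℓ w)]; exact h3
    exact ereal_add_coe_cancel σ h4


end Aux

/-- If `g, ℓ ∈ Γ₀(G)` and `dom ℓ* = G`, then `∂g □ ∂ℓ = ∂(g □ ℓ)` and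
`g □ ℓ ∈ Γ₀(G)`. -/
theorem stmt11 [CompleteSpace G]
    (g ℓ : G → EReal)
    (hg : EProper g ∧ LowerSemicontinuous g ∧ EConvexOn g)
    (hℓ : EProper ℓ ∧ LowerSemicontinuous ℓ ∧ EConvexOn ℓ)
    (hdom : ∀ u, EConj ℓ u ≠ ⊤) :
    (∀ x, parSum (ESubdiff g) (ESubdiff ℓ) x = ESubdiff (EInfConv g ℓ) x) ∧
    EProper (EInfConv g ℓ) ∧ LowerSemicontinuous (EInfConv g ℓ) ∧
    EConvexOn (EInfConv g ℓ) := by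
  obtain ⟨hgp, hgl, hgc⟩ := hg
  obtain ⟨hlp, hll, hlc⟩ := hℓ
  refine ⟨fun x => Set.Subset.antisymm
      (parSum_subset_subdiff hgp hgl hgc hlp hll hlc hdom x)
      (subdiff_subset_parSum hgp hgl hgc hlp hll hlc hdom x), ?_, ?_, ?_⟩
  · constructor
    · exact infconv_ne_bot hgp hgl hgc hdom
    · obtain ⟨y0, hy0⟩ := hgp.2
      obtain ⟨z0, hz0⟩ := hlp.2
      refine ⟨y0 + z0, ?_⟩
      have harg : y0 + z0 - y0 = z0 := by abel
      have h1 : EInfConv g ℓ (y0 + z0) ≤ g y0 + ℓ z0 := by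
        have := iInf_le (fun y => g y + ℓ (y0 + z0 - y)) y0
        rwa [harg] at this
      exact ne_top_of_le_ne_top (EReal.add_lt_top hy0 hz0).ne h1
  · exact infconv_lsc hgp hgl hgc hlp hll hlc hdom
  · exact infconv_convex hgp hgl hgc hlp hll hlc hdom

end
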